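/- For c > 0, K > 0 with K ≠ −λ_m for all m, every eigenvalue of the operator 𝒜_w(ϑ, w) = (−Kϑ + w(0), −i w'' − c w) on ℂ × L²(0,1), with domain {(ϑ,w) ∈ ℂ × H²(0,1) : w(1)=0, w'(0)=0}, is either λ₀ = −K (with eigenfunction (ϑ₀, 0), ϑ₀ ≠ 0) or λ_m = −c + i(m+1/2)²π² for some m ∈ ℕ (with eigenfunction (1/(K+λ_m), cos((m+1/2)πx))). -/

import Mathlib

lemma hasDerivAt_ccos (k : ℂ) (x : ℝ) :
    HasDerivAt (fun y : ℝ => Complex.cos (k * y)) (-k * Complex.sin (k * x)) x := by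
  have h1 : HasDerivAt (fun z : ℂ => Complex.cos (k * z)) (-Complex.sin (k * x) * k) (x : ℂ) := by
    exact ((Complex.hasDerivAt_cos (k * x)).comp (x : ℂ)
      ((hasDerivAt_id (x : ℂ)).const_mul k)).congr_deriv (by ring)
  simpa [mul_comm] using h1.comp_ofReal

lemma hasDerivAt_csin (k : ℂ) (x : ℝ) :
    HasDerivAt (fun y : ℝ => Complex.sin (k * y)) (k * Complex.cos (k * x)) x := by
  have h1 : HasDerivAt (fun z : ℂ => Complex.sin (k * z)) (Complex.cos (k * x) * k) (x : ℂ) := by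
    exact ((Complex.hasDerivAt_sin (k * x)).comp (x : ℂ)
      ((hasDerivAt_id (x : ℂ)).const_mul k)).congr_deriv (by ring)
  simpa [mul_comm] using h1.comp_ofReal

lemma iteratedDeriv_two_ccos (k : ℂ) (x : ℝ) :
    iteratedDeriv 2 (fun y : ℝ => Complex.cos (k * y)) x = -k ^ 2 * Complex.cos (k * x) := by
  have hd : deriv (fun y : ℝ => Complex.cos (k * y)) = fun y : ℝ => -k * Complex.sin (k * y) := by
    ext y; exact (hasDerivAt_ccos k y).deriv
  rw [show (2 : ℕ) = 1 + 1 from rfl, iteratedDeriv_succ, iteratedDeriv_one, hd]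
  have : HasDerivAt (fun y : ℝ => -k * Complex.sin (k * y)) (-k * (k * Complex.cos (k * x))) x :=
    (hasDerivAt_csin k x).const_mul (-k)
  rw [this.deriv]; ring



/-- The eigenvalues `λ_m = -c + i (m+1/2)² π²`. -/
noncomputable def lamEig (c : ℝ) (m : ℕ) : ℂ :=
  -(c : ℂ) + Complex.I * ((((m : ℝ) + 1 / 2) ^ 2 * Real.pi ^ 2 : ℝ) : ℂ)

/-- The eigenfunctions `w_m(x) = cos((m+1/2)πx)`. -/
noncomputable def wEig (m : ℕ) (x : ℝ) : ℂ :=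
  ((Real.cos (((m : ℝ) + 1 / 2) * Real.pi * x) : ℝ) : ℂ)

lemma wEig_eq (m : ℕ) :
    wEig m = fun x : ℝ => Complex.cos (((((m : ℝ) + 1 / 2) * Real.pi : ℝ) : ℂ) * x) := by
  funext x
  rw [wEig, Complex.ofReal_cos]
  push_cast
  ring_nf

theorem stmt_11 (c K : ℝ) (hc : 0 < c) (hK : 0 < K)
    (hKm : ∀ m : ℕ, (K : ℂ) ≠ -lamEig c m) :
    (∀ (lam ϑ : ℂ) (w : ℝ → ℂ), ContDiff ℝ 2 w → w 1 = 0 → deriv w 0 = 0 →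
      ¬(ϑ = 0 ∧ ∀ x ∈ Set.Icc (0 : ℝ) 1, w x = 0) →
      -(K : ℂ) * ϑ + w 0 = lam * ϑ →
      (∀ x ∈ Set.Icc (0 : ℝ) 1,
          -Complex.I * iteratedDeriv 2 w x - (c : ℂ) * w x = lam * w x) →
      (lam = -(K : ℂ) ∨ ∃ m : ℕ, lam = lamEig c m)) ∧
    (∀ ϑ₀ : ℂ, ϑ₀ ≠ 0 → -(K : ℂ) * ϑ₀ + (0 : ℂ) = (-(K : ℂ)) * ϑ₀) ∧
    (∀ m : ℕ,
      (-(K : ℂ) * (1 / ((K : ℂ) + lamEig c m)) + wEig m 0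
          = lamEig c m * (1 / ((K : ℂ) + lamEig c m))) ∧
      ∀ x ∈ Set.Icc (0 : ℝ) 1,
        -Complex.I * iteratedDeriv 2 (wEig m) x - (c : ℂ) * wEig m x
          = lamEig c m * wEig m x) := by
  refine ⟨?_, fun ϑ₀ _ => by ring, fun m => ⟨?_, ?_⟩⟩
  · intro lam ϑ w hw hw1 hw0 hnt hϑ hode
    by_cases hzero : ∀ x ∈ Set.Icc (0 : ℝ) 1, w x = 0
    · left
      have hϑ0 : ϑ ≠ 0 := fun h => hnt ⟨h, hzero⟩
      have h0 : w 0 = 0 := hzero 0 (by norm_num)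
      rw [h0] at hϑ
      exact mul_right_cancel₀ hϑ0
        (show lam * ϑ = (-(K : ℂ)) * ϑ by linear_combination -hϑ)
    · right
      have hD : ∀ x ∈ Set.Icc (0 : ℝ) 1,
          deriv (deriv w) x = Complex.I * (lam + c) * w x := by
        intro x hx
        have h2 : iteratedDeriv 2 w x = deriv (deriv w) x := by
          rw [show (2 : ℕ) = 1 + 1 from rfl, iteratedDeriv_succ, iteratedDeriv_one]
        have h := hode x hx
        rw [h2] at h
        linear_combination Complex.I * h + deriv (deriv w) x * Complex.I_sq
      obtain ⟨k, hk⟩ :=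
        IsAlgClosed.exists_pow_nat_eq (-(Complex.I * (lam + c))) (n := 2) (by norm_num)
      have hdw : Differentiable ℝ w := hw.differentiable (by norm_num)
      have hcd1 : ContDiff ℝ 1 (deriv w) := by
        have h21 : ContDiff ℝ ((1 : WithTop ℕ∞) + 1) w := by
          convert hw using 2
          norm_num
        exact (contDiff_succ_iff_deriv.mp h21).2.2
      have hdw2 : Differentiable ℝ (deriv w) := hcd1.differentiable one_ne_zero
      set L : (ℂ × ℂ) →L[ℂ] (ℂ × ℂ) :=
        (ContinuousLinearMap.snd ℂ ℂ ℂ).prod ((-k ^ 2) • ContinuousLinearMap.fst ℂ ℂ ℂ) with hL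
      set f : ℝ → ℂ × ℂ := fun x => (w x, deriv w x) with hf
      set g : ℝ → ℂ × ℂ :=
        fun x => (w 0 * Complex.cos (k * x), -(w 0) * k * Complex.sin (k * x)) with hg
      have heq : Set.EqOn f g (Set.Icc 0 1) := by
        apply ODE_solution_unique (v := fun _ p => L p) (fun _ => L.lipschitz)
        · exact (hw.continuous.prodMk hcd1.continuous).continuousOn
        · intro t ht
          have h1 : HasDerivAt f (deriv w t, deriv (deriv w) t) t :=
            (hdw t).hasDerivAt.prodMk (hdw2 t).hasDerivAt
          have h2 : L (f t) = (deriv w t, deriv (deriv w) t) := by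
            have ht' : t ∈ Set.Icc (0 : ℝ) 1 := ⟨ht.1, ht.2.le⟩
            simp only [hL, hf, ContinuousLinearMap.prod_apply, ContinuousLinearMap.coe_snd',
              ContinuousLinearMap.coe_smul', Pi.smul_apply, ContinuousLinearMap.coe_fst',
              smul_eq_mul]
            rw [hD t ht']
            refine Prod.ext rfl ?_
            simp only
            linear_combination -w t * hk
          rw [← h2] at h1
          exact h1.hasDerivWithinAt
        · apply Continuous.continuousOn
          fun_prop
        · intro t ht
          have h1 : HasDerivAt g
              (w 0 * (-k * Complex.sin (k * t)), -(w 0) * k * (k * Complex.cos (k * t))) t :=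
            ((hasDerivAt_ccos k t).const_mul (w 0)).prodMk
              ((hasDerivAt_csin k t).const_mul (-(w 0) * k))
          have h2 : L (g t) =
              (w 0 * (-k * Complex.sin (k * t)), -(w 0) * k * (k * Complex.cos (k * t))) := by
            simp only [hL, hg, ContinuousLinearMap.prod_apply, ContinuousLinearMap.coe_snd',
              ContinuousLinearMap.coe_smul', Pi.smul_apply, ContinuousLinearMap.coe_fst',
              smul_eq_mul]
            exact Prod.ext (by ring) (by ring)
          rw [← h2] at h1
          exact h1.hasDerivWithinAt
        · simp [hf, hg, hw0]
      have hw0ne : w 0 ≠ 0 := by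
        intro h
        push_neg at hzero
        obtain ⟨x, hx, hne⟩ := hzero
        have := congrArg Prod.fst (heq hx)
        simp only [hf, hg, h, zero_mul, mul_comm, mul_zero] at this
        exact hne (by simpa [h] using this)
      have hcos : Complex.cos k = 0 := by
        have h1 := congrArg Prod.fst (heq (Set.right_mem_Icc.mpr zero_le_one))
        simp only [hf, hg, hw1, mul_one] at h1
        rcases mul_eq_zero.mp h1.symm with h | h
        · exact absurd h hw0ne
        · simpa using h
      obtain ⟨n, hn⟩ := Complex.cos_eq_zero_iff.mp hcos
      have hlam : lam = -(c : ℂ) + Complex.I * k ^ 2 := by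
        linear_combination -Complex.I * hk + (lam + (c : ℂ)) * Complex.I_sq
      have key : ∀ m : ℕ, ((m : ℂ) + 1 / 2) ^ 2 = ((2 * (n : ℂ) + 1) / 2) ^ 2 →
          lam = lamEig c m := by
        intro m hm
        rw [hlam, lamEig, hn]
        push_cast
        linear_combination -Complex.I * (Real.pi : ℂ) ^ 2 * hm
      rcases le_or_gt 0 n with h | h
      · refine ⟨n.toNat, key _ ?_⟩
        have hc2 : ((n.toNat : ℕ) : ℂ) = (n : ℂ) := by
          exact_mod_cast congrArg (fun z : ℤ => (z : ℂ)) (Int.toNat_of_nonneg h)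
        rw [hc2]
        ring
      · refine ⟨(-n - 1).toNat, key _ ?_⟩
        have h1 : (0 : ℤ) ≤ -n - 1 := by omega
        have hc2 : (((-n - 1).toNat : ℕ) : ℂ) = -(n : ℂ) - 1 := by
          exact_mod_cast congrArg (fun z : ℤ => (z : ℂ)) (Int.toNat_of_nonneg h1)
        rw [hc2]
        ring
  · have h0 : wEig m 0 = 1 := by simp [wEig]
    have hne : (K : ℂ) + lamEig c m ≠ 0 := by
      intro h
      exact hKm m (by linear_combination h)
    rw [h0]
    field_simp
    ring
  · intro x hx
    rw [wEig_eq, iteratedDeriv_two_ccos]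
    simp only [lamEig]
    push_cast
    ring
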